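/- Let p be a prime, e ≥ 1, q = p^e, l ≥ 1, and f₀ : F_q^2 → F_q^l with f₀(0,0) = 0. Suppose (u,v) = (x₀, w₀) → (x₁, w₁) → ⋯ → (x_k, w_k) = (a, -v + y) is a directed walk in D(q;f₀) with k ≥ 1 odd. Then y ∈ g(u) + h(a) + W₀. -/

import Mathlib

/-- If `(u,v) = (x₀,w₀) → ⋯ → (x_k,w_k) = (a, -v + y)` is a directed walk
in `D(q;f₀)` with `k ≥ 1` odd, then `y ∈ g(u) + h(a) + W₀`. -/
theorem stmt_5 {p e l : ℕ} (hp : p.Prime) (he : 1 ≤ e) (hl : 1 ≤ l)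
    {F : Type*} [Field F] [Fintype F] [Algebra (ZMod p) F]
    (hF : Fintype.card F = p ^ e)
    (f₀ : F × F → Fin l → F) (hf₀ : f₀ (0, 0) = 0)
    (g h : F → Fin l → F) (hg : ∀ t, g t = f₀ (t, 0)) (hh : ∀ t, h t = f₀ (0, t))
    (W₀ : Submodule (ZMod p) (Fin l → F))
    (hW₀ : W₀ = Submodule.span (ZMod p)
      (Set.range fun xy : F × F => f₀ xy - g xy.2 - h xy.1))
    (k : ℕ) (hk1 : 1 ≤ k) (hkodd : Odd k)
    (c : ℕ → F × (Fin l → F)) (u a : F) (v y : Fin l → F)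
    (hc0 : c 0 = (u, v)) (hck : c k = (a, -v + y))
    (hstep : ∀ i < k, (c i).2 + (c (i + 1)).2 = f₀ ((c i).1, (c (i + 1)).1)) :
    ∃ w ∈ W₀, y = g u + h a + w := by
  have key : ∀ x z : F, f₀ (x, z) - g z - h x ∈ W₀ := by
    intro x z
    rw [hW₀]
    exact Submodule.subset_span ⟨(x, z), rfl⟩
  have hg0 : g 0 = 0 := by rw [hg]; exact hf₀
  have hh0 : h 0 = 0 := by rw [hh]; exact hf₀
  have hgh : ∀ t, g t - h t ∈ W₀ := by
    intro t
    have := key t 0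
    rw [← hg t, hg0, sub_zero] at this
    exact this
  have hhg : ∀ t, h t - g t ∈ W₀ := by
    intro t
    have := key 0 t
    rw [← hh t, hh0, sub_zero] at this
    exact this
  have main : ∀ m : ℕ, ∀ (c : ℕ → F × (Fin l → F)) (u a : F) (v y : Fin l → F),
      c 0 = (u, v) → c (2 * m + 1) = (a, -v + y) →
      (∀ i < 2 * m + 1, (c i).2 + (c (i + 1)).2 = f₀ ((c i).1, (c (i + 1)).1)) →
      y - g u - h a ∈ W₀ := by
    intro m
    induction m with
    | zero =>
      intro c u a v y h0 h1 hs
      have e1 := hs 0 (by norm_num)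
      rw [h0] at e1
      rw [show (0 : ℕ) + 1 = 2 * 0 + 1 from rfl, h1] at e1
      simp only at e1
      have ey : y = f₀ (u, a) := by
        have : v + (-v + y) = y := by abel
        rw [this] at e1; exact e1
      have : y - g u - h a =
          (f₀ (u, a) - g a - h u) + ((g a - h a) + (h u - g u)) := by
        rw [ey]; abel
      rw [this]
      exact add_mem (key u a) (add_mem (hgh a) (hhg u))
    | succ n ih =>
      intro c u a v y h0 hk hs
      set x₁ := (c 1).1 with hx₁
      set u' := (c 2).1 with hu'
      set v' := (c 2).2 with hv'
      have e0 := hs 0 (by omega)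
      have e1 := hs 1 (by omega)
      rw [h0] at e0
      simp only at e0
      -- e0 : v + (c 1).2 = f₀ (u, x₁)
      -- e1 : (c 1).2 + v' = f₀ (x₁, u')
      have hvv' : v' - v = f₀ (x₁, u') - f₀ (u, x₁) := by
        have : v + ((c 1).2 + v') = v + f₀ (x₁, u') := by rw [e1]
        rw [← add_assoc, e0] at this
        have := this.symm
        rw [eq_comm] at this
        -- this : f₀ (u, x₁) + v' = v + f₀ (x₁, u')
        have h2 : v' = v + f₀ (x₁, u') - f₀ (u, x₁) := by
          rw [← this]; abel
        rw [h2]; abel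
      have ihmem := ih (fun i => c (i + 2)) u' a v' (y + (v' - v)) ?_ ?_ ?_
      · have : y - g u - h a =
            ((y + (v' - v)) - g u' - h a)
            - (f₀ (x₁, u') - g u' - h x₁)
            + (f₀ (u, x₁) - g x₁ - h u)
            + (g x₁ - h x₁) + (h u - g u) := by
          rw [hvv']; abel
        rw [this]
        exact add_mem (add_mem (add_mem (sub_mem ihmem (key x₁ u')) (key u x₁))
          (hgh x₁)) (hhg u)
      · simp only [Nat.zero_add]; rfl
      · have heq : 2 * n + 1 + 2 = 2 * (n + 1) + 1 := by ring
        simp only [heq, hk]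
        congr 1
        abel
      · intro i hi
        exact hs (i + 2) (by omega)
  obtain ⟨m, hm⟩ := hkodd
  have hmem := main m c u a v y hc0 (by rw [← hm]; exact hck)
    (by intro i hi; exact hstep i (by omega))
  exact ⟨y - g u - h a, hmem, by abel⟩
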